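/- Let f(x) = exp(m⁺x) - exp(m⁻x) with m⁻ < 0 < m⁺ roots of ρ - μm - (σ²/2)m² = 0, μ > 0, and x̂ = (1/(m⁺-m⁻)) ln((m⁻)²/(m⁺)²). Then the function V̂(x) = f(x)/f'(x̂) on [0, x̂] and V̂(x) = x - x̂ + μ/ρ on [x̂,∞) is concave on (0,∞). -/

import Mathlib

set_option maxHeartbeats 1000000

private lemma expd (c x : ℝ) : HasDerivAt (fun t => Real.exp (c*t)) (c * Real.exp (c*x)) x := by
  have h := (Real.hasDerivAt_exp (c*x)).comp x ((hasDerivAt_id x).const_mul c)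
  rw [show c * Real.exp (c*x) = Real.exp (c*x) * (c*1) by ring]; exact h

private lemma fprime_anti (mm mp xhat : ℝ) (hmm : mm < 0) (hmp : 0 < mp)
    (hkey : mp^2 * Real.exp (mp*xhat) = mm^2 * Real.exp (mm*xhat)) :
    AntitoneOn (fun x => mp * Real.exp (mp*x) - mm * Real.exp (mm*x)) (Set.Iic xhat) := by
  apply antitoneOn_of_deriv_nonpos (convex_Iic xhat)
  · exact Continuous.continuousOn (by continuity)
  · intro x _
    exact (((expd mp x).const_mul mp).sub
      ((expd mm x).const_mul mm)).differentiableAt.differentiableWithinAt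
  · intro x hx
    rw [interior_Iic] at hx
    have hD : deriv (fun x => mp * Real.exp (mp*x) - mm * Real.exp (mm*x)) x
        = mp * (mp * Real.exp (mp*x)) - mm * (mm * Real.exp (mm*x)) :=
      (((expd mp x).const_mul mp).sub ((expd mm x).const_mul mm)).deriv
    rw [hD]
    have e1 : mp^2 * Real.exp (mp*x)
        = mm^2 * Real.exp (mm*xhat) * Real.exp (mp*(x - xhat)) := by
      rw [← hkey, mul_assoc (mp^2), ← Real.exp_add]
      ring_nf
    have e2 : mm^2 * Real.exp (mm*x)
        = mm^2 * Real.exp (mm*xhat) * Real.exp (mm*(x - xhat)) := by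
      rw [mul_assoc, ← Real.exp_add]; ring_nf
    have hxx : x - xhat ≤ 0 := by
      have := le_of_lt (Set.mem_Iio.mp hx); linarith
    have hle : Real.exp (mp*(x - xhat)) ≤ Real.exp (mm*(x - xhat)) := by
      apply Real.exp_le_exp.mpr
      exact mul_le_mul_of_nonpos_right (by linarith) hxx
    have hpos : 0 < mm^2 * Real.exp (mm*xhat) := by
      have h1 : (0:ℝ) < mm^2 := by nlinarith
      have h2 := Real.exp_pos (mm*xhat)
      exact mul_pos h1 h2
    nlinarith [Real.exp_pos (mp*(x-xhat)), Real.exp_pos (mm*(x-xhat))]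

/-- The function V̂, equal to f(x)/f'(x̂) on [0,x̂] and x - x̂ + μ/ρ beyond x̂,
is concave on (0,∞). -/
theorem stmt_5 (ρ μ σ mm mp : ℝ) (hρ : 0 < ρ) (hμ : 0 < μ) (hσ : 0 < σ)
    (hmm : mm < 0) (hmp : 0 < mp)
    (hrootm : ρ - μ * mm - σ^2 / 2 * mm^2 = 0)
    (hrootp : ρ - μ * mp - σ^2 / 2 * mp^2 = 0) :
    let f : ℝ → ℝ := fun x => Real.exp (mp * x) - Real.exp (mm * x)
    let xhat : ℝ := (1 / (mp - mm)) * Real.log (mm^2 / mp^2)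
    let Vhat : ℝ → ℝ := fun x =>
      if x ≤ xhat then f x / (mp * Real.exp (mp * xhat) - mm * Real.exp (mm * xhat))
      else x - xhat + μ / ρ
    ConcaveOn ℝ (Set.Ioi 0) Vhat := by
  intro f xhat Vhat
  have hmm0 : mm ≠ 0 := ne_of_lt hmm
  have hdm : (0:ℝ) < mp - mm := by linarith
  set C : ℝ := mp * Real.exp (mp * xhat) - mm * Real.exp (mm * xhat) with hCdef
  have hC : 0 < C := by
    have h1 := Real.exp_pos (mp * xhat)
    have h2 := Real.exp_pos (mm * xhat)
    nlinarith
  -- key exponential identity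
  have hx0 : (mp - mm) * xhat = Real.log (mm^2/mp^2) := by
    show (mp - mm) * ((1/(mp-mm)) * Real.log (mm^2/mp^2)) = _
    field_simp
  have hexp : Real.exp ((mp-mm)*xhat) = mm^2/mp^2 := by
    rw [hx0]; exact Real.exp_log (by positivity)
  have hkey : mp^2 * Real.exp (mp*xhat) = mm^2 * Real.exp (mm*xhat) := by
    have h := hexp
    rw [show (mp-mm)*xhat = mp*xhat - mm*xhat by ring, Real.exp_sub] at h
    have hB := Real.exp_pos (mm*xhat)
    field_simp at h
    rw [mul_comm xhat mm] at h
    linarith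
  -- Vieta-type identity
  have hsum : μ + σ^2/2*(mp+mm) = 0 := by
    have h : (mp - mm) * (μ + σ^2/2*(mp+mm)) = 0 := by linear_combination hrootm - hrootp
    rcases mul_eq_zero.mp h with h' | h'
    · exact absurd h' (ne_of_gt hdm)
    · exact h'
  have hvieta : ρ * (mm + mp) = μ * (mp * mm) := by
    linear_combination (mm + mp) * hrootp + mp^2 * hsum
  -- value match at xhat
  have hval : (Real.exp (mp*xhat) - Real.exp (mm*xhat)) / C = μ / ρ := by
    have h2 : mp^2 * (ρ * (Real.exp (mp*xhat) - Real.exp (mm*xhat))) = mp^2 * (μ * C) := by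
      rw [hCdef]
      linear_combination (ρ - μ*mp) * hkey + (Real.exp (mm*xhat))*(mm - mp) * hvieta
    have h3 : ρ * (Real.exp (mp*xhat) - Real.exp (mm*xhat)) = μ * C :=
      mul_left_cancel₀ (by positivity) h2
    rw [div_eq_div_iff (ne_of_gt hC) (ne_of_gt hρ)]
    linarith
  -- derivative candidate
  set g : ℝ → ℝ := fun x =>
    if x ≤ xhat then (mp * Real.exp (mp*x) - mm * Real.exp (mm*x)) / C else 1 with hgdef
  have hfd : ∀ x : ℝ, HasDerivAt f (mp * Real.exp (mp*x) - mm * Real.exp (mm*x)) x :=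
    fun x => (expd mp x).sub (expd mm x)
  have hVd : ∀ x : ℝ, HasDerivAt Vhat (g x) x := by
    intro x
    rcases lt_trichotomy x xhat with hx | hx | hx
    · have hg : g x = (mp * Real.exp (mp*x) - mm * Real.exp (mm*x)) / C := if_pos hx.le
      rw [hg]
      have h := (hfd x).div_const C
      apply h.congr_of_eventuallyEq
      filter_upwards [Iio_mem_nhds hx] with y hy
      exact if_pos (le_of_lt hy)
    · have hg : g x = 1 := by
        rw [hgdef]; simp only [hx, le_refl, if_pos]
        exact div_self (ne_of_gt hC)
      rw [hg, hx]
      have hleft : HasDerivWithinAt Vhat 1 (Set.Iic xhat) xhat := by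
        have h := ((hfd xhat).div_const C).hasDerivWithinAt (s := Set.Iic xhat)
        have hd : (mp * Real.exp (mp*xhat) - mm * Real.exp (mm*xhat)) / C = 1 :=
          div_self (ne_of_gt hC)
        rw [hd] at h
        apply h.congr
        · intro y hy; exact if_pos hy
        · exact if_pos le_rfl
      have hright : HasDerivWithinAt Vhat 1 (Set.Ici xhat) xhat := by
        have h : HasDerivAt (fun y => y - xhat + μ/ρ) 1 xhat := by
          simpa using ((hasDerivAt_id xhat).sub_const xhat).add_const (μ/ρ)
        apply h.hasDerivWithinAt.congr
        · intro y hy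
          rcases eq_or_lt_of_le (Set.mem_Ici.mp hy) with h' | h'
          · rw [← h']
            show Vhat xhat = xhat - xhat + μ/ρ
            have hv : Vhat xhat = (Real.exp (mp*xhat) - Real.exp (mm*xhat)) / C := if_pos le_rfl
            rw [hv, hval]; ring
          · show Vhat y = y - xhat + μ/ρ
            exact if_neg (not_le.mpr h')
        · show Vhat xhat = xhat - xhat + μ/ρ
          have hv : Vhat xhat = (Real.exp (mp*xhat) - Real.exp (mm*xhat)) / C := if_pos le_rfl
          rw [hv, hval]; ring
      have hu := hleft.union hright
      rw [Set.Iic_union_Ici, hasDerivWithinAt_univ] at hu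
      exact hu
    · have hg : g x = 1 := if_neg (not_le.mpr hx)
      rw [hg]
      have h : HasDerivAt (fun y => y - xhat + μ/ρ) 1 x := by
        simpa using ((hasDerivAt_id x).sub_const xhat).add_const (μ/ρ)
      apply h.congr_of_eventuallyEq
      filter_upwards [Ioi_mem_nhds hx] with y hy
      exact if_neg (not_le.mpr hy)
  have hf'anti := fprime_anti mm mp xhat hmm hmp hkey
  -- conclude
  apply AntitoneOn.concaveOn_of_deriv (convex_Ioi 0)
  · exact fun x _ => (hVd x).continuousAt.continuousWithinAt
  · intro x _
    exact (hVd x).differentiableAt.differentiableWithinAt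
  · rw [interior_Ioi]
    have hderiv : deriv Vhat = g := funext fun x => (hVd x).deriv
    rw [hderiv]
    intro x _ y _ hxy
    by_cases hx : x ≤ xhat
    · by_cases hy : y ≤ xhat
      · rw [hgdef]
        simp only [if_pos hx, if_pos hy]
        have h := hf'anti (Set.mem_Iic.mpr hx) (Set.mem_Iic.mpr hy) hxy
        exact div_le_div_of_nonneg_right h hC.le
      · rw [hgdef]
        simp only [if_pos hx, if_neg hy]
        have h := hf'anti (Set.mem_Iic.mpr hx) (Set.mem_Iic.mpr le_rfl) hx
        rw [le_div_iff₀ hC, one_mul]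
        exact h
    · have hy : ¬ y ≤ xhat := fun h => hx (hxy.trans h)
      rw [hgdef]
      simp only [if_neg hx, if_neg hy, le_refl]
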